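/- Let M be a sparse paving matroid on a ground set E of size m with rank r, and let e, f ∈ E be distinct elements. If X is a basis chosen uniformly at random from the bases B of M, then Pr(e ∈ X and f ∈ X) ≤ Pr(e ∈ X) · Pr(f ∈ X); i.e., the events e ∈ X and f ∈ X are negatively correlated. -/

import Mathlib

open scoped symmDiff

variable {α : Type*} [DecidableEq α]

/-- `B` is the collection of bases of a matroid of rank `r` on ground set `E`. -/
def MatroidBases (E : Finset α) (r : ℕ) (B : Finset (Finset α)) : Prop :=
  B.Nonempty ∧ (∀ X ∈ B, X ⊆ E ∧ X.card = r) ∧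
    ∀ X ∈ B, ∀ Y ∈ B, ∀ e ∈ X, ∃ f ∈ Y, insert f (X.erase e) ∈ B

/-- A set is independent if it is contained in some basis. -/
def Indep (B : Finset (Finset α)) (X : Finset α) : Prop := ∃ Y ∈ B, X ⊆ Y

/-- A circuit is a minimal dependent subset of the ground set. -/
def Circuit (E : Finset α) (B : Finset (Finset α)) (C : Finset α) : Prop :=
  C ⊆ E ∧ ¬ Indep B C ∧ ∀ x ∈ C, Indep B (C.erase x)

/-- A paving matroid of rank `r`: every `(r-1)`-element subset of the ground set is independent. -/
def IsPaving (E : Finset α) (r : ℕ) (B : Finset (Finset α)) : Prop :=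
  MatroidBases E r B ∧ ∀ X ⊆ E, X.card = r - 1 → Indep B X

/-- A sparse paving matroid: a paving matroid in which any two distinct circuits of size `r`
have symmetric difference of size greater than 2. -/
def IsSparsePaving (E : Finset α) (r : ℕ) (B : Finset (Finset α)) : Prop :=
  IsPaving E r B ∧ ∀ C C' : Finset α, Circuit E B C → Circuit E B C' → C.card = r →
    C'.card = r → C ≠ C' → 2 < (C ∆ C').card

lemma nonbase_circuit {E : Finset α} {r : ℕ} {B : Finset (Finset α)}
    (hP : IsPaving E r B) {C : Finset α} (hCE : C ⊆ E) (hCr : C.card = r) (hCB : C ∉ B) :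
    Circuit E B C := by
  refine ⟨hCE, ?_, ?_⟩
  · rintro ⟨Y, hY, hCY⟩
    have hY' := (hP.1.2.1 Y hY).2
    have : C = Y := Finset.eq_of_subset_of_card_le hCY (by omega)
    exact hCB (this ▸ hY)
  · intro x hx
    exact hP.2 _ ((Finset.erase_subset _ _).trans hCE)
      (by rw [Finset.card_erase_of_mem hx, hCr])

lemma nonbase_eq {E : Finset α} {r : ℕ} {B : Finset (Finset α)}
    (hM : IsSparsePaving E r B) {C C' : Finset α}
    (hC : C ⊆ E) (hCr : C.card = r) (hCB : C ∉ B)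
    (hC' : C' ⊆ E) (hC'r : C'.card = r) (hC'B : C' ∉ B)
    (h2 : (C ∆ C').card ≤ 2) : C = C' := by
  by_contra hne
  have := hM.2 C C' (nonbase_circuit hM.1 hC hCr hCB)
    (nonbase_circuit hM.1 hC' hC'r hC'B) hCr hC'r hne
  omega

lemma arith_key (a c P R S Q u v : ℕ) (hR : a*(u+2) ≤ R*(v+1) + P)
    (hS : c*(v+2) ≤ S*(u+1) + Q) (hPa : P ≤ a) (hQc : Q ≤ c) : P * Q ≤ R * S := by
  have hR' : (a:ℤ) * ((u:ℤ)+2) ≤ (R:ℤ)*((v:ℤ)+1) + P := by exact_mod_cast hR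
  have hS'' : (c:ℤ) * ((v:ℤ)+2) ≤ (S:ℤ)*((u:ℤ)+1) + Q := by exact_mod_cast hS
  have hPa' : (P:ℤ) ≤ a := by exact_mod_cast hPa
  have hQc' : (Q:ℤ) ≤ c := by exact_mod_cast hQc
  have h0P : (0:ℤ) ≤ P := Int.natCast_nonneg _
  have h0Q : (0:ℤ) ≤ Q := Int.natCast_nonneg _
  have h0a : (0:ℤ) ≤ a := Int.natCast_nonneg _
  have h0c : (0:ℤ) ≤ c := Int.natCast_nonneg _
  have A1 : (a:ℤ)*((u:ℤ)+2) - P ≤ (R:ℤ)*((v:ℤ)+1) := by linarith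
  have A0 : (0:ℤ) ≤ (a:ℤ)*((u:ℤ)+2) - P := by
    have h1 : (a:ℤ) ≤ a*((u:ℤ)+2) := le_mul_of_one_le_right h0a (by linarith [Int.natCast_nonneg u])
    linarith
  have B1 : (c:ℤ)*((v:ℤ)+2) - Q ≤ (S:ℤ)*((u:ℤ)+1) := by linarith
  have B0 : (0:ℤ) ≤ (c:ℤ)*((v:ℤ)+2) - Q := by
    have h1 : (c:ℤ) ≤ c*((v:ℤ)+2) := le_mul_of_one_le_right h0c (by linarith [Int.natCast_nonneg v])
    linarith
  have prod : ((a:ℤ)*((u:ℤ)+2) - P) * ((c:ℤ)*((v:ℤ)+2) - Q) ≤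
      ((R:ℤ)*((v:ℤ)+1)) * ((S:ℤ)*((u:ℤ)+1)) := mul_le_mul A1 B1 B0 (by positivity)
  have low : ((u:ℤ)+1)*((v:ℤ)+1)*((P:ℤ)*Q) ≤
      ((a:ℤ)*((u:ℤ)+2) - P) * ((c:ℤ)*((v:ℤ)+2) - Q) := by
    nlinarith [mul_nonneg (mul_nonneg h0P (show (0:ℤ) ≤ (u:ℤ)+1 by positivity))
        (mul_nonneg (sub_nonneg.2 hQc') (show (0:ℤ) ≤ (v:ℤ)+2 by positivity)),
      mul_nonneg (mul_nonneg (sub_nonneg.2 hPa') (show (0:ℤ) ≤ (u:ℤ)+2 by positivity))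
        (mul_nonneg h0Q (show (0:ℤ) ≤ (v:ℤ)+1 by positivity)),
      mul_nonneg (mul_nonneg (sub_nonneg.2 hPa') (show (0:ℤ) ≤ (u:ℤ)+2 by positivity))
        (mul_nonneg (sub_nonneg.2 hQc') (show (0:ℤ) ≤ (v:ℤ)+2 by positivity))]
  have hkey : ((u:ℤ)+1)*((v:ℤ)+1)*((P:ℤ)*Q) ≤ ((u:ℤ)+1)*((v:ℤ)+1)*((R:ℤ)*S) := by
    refine le_trans (le_trans low prod) (le_of_eq ?_)
    ring
  have final : (P:ℤ) * Q ≤ (R:ℤ) * S := le_of_mul_le_mul_left hkey (by positivity)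
  exact_mod_cast final

lemma mul_key (P R S Q n : ℕ) (hkey : P * Q ≤ R * S) (htot : n = P + R + S + Q) :
    P * n ≤ (P + R) * (P + S) := by nlinarith [hkey, htot]

lemma filter_split (s : Finset (Finset α)) (p q : Finset α → Prop)
    [DecidablePred p] [DecidablePred q] :
    (s.filter p).card = (s.filter (fun X => p X ∧ q X)).card +
      (s.filter (fun X => p X ∧ ¬ q X)).card := by
  rw [← Finset.filter_filter, ← Finset.filter_filter]
  exact (Finset.card_filter_add_card_filter_not q).symm

set_option maxHeartbeats 2000000 in
lemma key_ineq (E : Finset α) (r : ℕ) (B : Finset (Finset α)) (hM : IsSparsePaving E r B)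
    (e f : α) (he : e ∈ E) (hf : f ∈ E) (hef : e ≠ f) :
    (B.filter (fun X => e ∈ X ∧ f ∈ X)).card * (B.filter (fun X => e ∉ X ∧ f ∉ X)).card ≤
    (B.filter (fun X => e ∈ X ∧ f ∉ X)).card * (B.filter (fun X => e ∉ X ∧ f ∈ X)).card := by
  have hBprop := hM.1.1.2.1
  rcases le_or_gt r 1 with hr | hr
  · -- rank ≤ 1 : no basis contains both e and f
    have hP0 : B.filter (fun X => e ∈ X ∧ f ∈ X) = ∅ := by
      rw [Finset.filter_eq_empty_iff]
      rintro X hX ⟨heX, hfX⟩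
      have hsub : ({e, f} : Finset α) ⊆ X := by
        intro x hx; simp only [Finset.mem_insert, Finset.mem_singleton] at hx
        rcases hx with rfl | rfl <;> assumption
      have h2 : ({e, f} : Finset α).card = 2 := by
        rw [Finset.card_insert_of_notMem (by simpa using hef), Finset.card_singleton]
      have := Finset.card_le_card hsub
      have := (hBprop X hX).2
      omega
    simp [hP0]
  by_cases hm2 : E.card ≤ r + 1
  · -- tiny ground set : no basis avoids both e and f
    have hQ0 : B.filter (fun X => e ∉ X ∧ f ∉ X) = ∅ := by
      rw [Finset.filter_eq_empty_iff]
      rintro X hX ⟨heX, hfX⟩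
      have hXE : X ⊆ (E.erase e).erase f := by
        intro x hx
        have hxE := (hBprop X hX).1 hx
        refine Finset.mem_erase.2 ⟨fun h => hfX (h ▸ hx), Finset.mem_erase.2 ⟨fun h => heX (h ▸ hx), hxE⟩⟩
      have hcard := Finset.card_le_card hXE
      have h1 : (E.erase e).card = E.card - 1 := Finset.card_erase_of_mem he
      have h2 : ((E.erase e).erase f).card = (E.erase e).card - 1 :=
        Finset.card_erase_of_mem (Finset.mem_erase.2 ⟨fun h => hef h.symm, hf⟩)
      have := (hBprop X hX).2
      omega
    simp [hQ0]
  push_neg at hm2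
  obtain ⟨v, rfl⟩ : ∃ v, r = v + 2 := ⟨r - 2, by omega⟩
  obtain ⟨u, hu⟩ : ∃ u, E.card = (v+2)+2+u := ⟨E.card - (v+4), by omega⟩
  set E2 : Finset α := (E.erase e).erase f with hE2
  have hfE' : f ∈ E.erase e := Finset.mem_erase.2 ⟨fun h => hef h.symm, hf⟩
  have hE2card : E2.card = v + u + 2 := by
    rw [hE2, Finset.card_erase_of_mem hfE', Finset.card_erase_of_mem he]; omega
  have hE2mem : ∀ x, x ∈ E2 ↔ x ∈ E ∧ x ≠ e ∧ x ≠ f := by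
    intro x; rw [hE2, Finset.mem_erase, Finset.mem_erase]; tauto
  set PS : Finset (Finset α) := E.powersetCard (v+2) with hPS
  set N : Finset (Finset α) := PS \ B with hNdef
  have hBPS : B ⊆ PS := by
    intro X hX
    exact Finset.mem_powersetCard.2 ⟨(hBprop X hX).1, (hBprop X hX).2⟩
  have hNmem : ∀ C ∈ N, C ⊆ E ∧ C.card = v + 2 ∧ C ∉ B := by
    intro C hC
    rw [hNdef, Finset.mem_sdiff, hPS, Finset.mem_powersetCard] at hC
    tauto
  have hsp : ∀ (p : Finset α → Prop) (hp : DecidablePred p),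
      (PS.filter p).card = (B.filter p).card + (N.filter p).card := by
    intro p hp
    have hun : PS = B ∪ N := by rw [hNdef, Finset.union_sdiff_of_subset hBPS]
    rw [hun, Finset.filter_union]
    exact Finset.card_union_of_disjoint (Finset.disjoint_filter_filter Finset.disjoint_sdiff)
  -- cardinalities of the four classes of r-subsets
  have hS11 : (PS.filter (fun X => e ∈ X ∧ f ∈ X)).card = (E2.powersetCard v).card := by
    apply Finset.card_nbij' (fun X => (X.erase e).erase f) (fun Y => insert e (insert f Y))
    · intro X hX
      rw [Finset.mem_coe, Finset.mem_filter, hPS, Finset.mem_powersetCard] at hX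
      obtain ⟨⟨hXE, hXcard⟩, heX, hfX⟩ := hX
      dsimp only
      rw [Finset.mem_coe, Finset.mem_powersetCard]
      constructor
      · intro x hx
        rw [Finset.mem_erase, Finset.mem_erase] at hx
        exact (hE2mem x).2 ⟨hXE hx.2.2, hx.2.1, hx.1⟩
      · rw [Finset.card_erase_of_mem (Finset.mem_erase.2 ⟨fun h => hef h.symm, hfX⟩),
          Finset.card_erase_of_mem heX, hXcard]
        omega
    · intro Y hY
      rw [Finset.mem_coe, Finset.mem_powersetCard] at hY
      obtain ⟨hYE2, hYcard⟩ := hY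
      have hfY : f ∉ Y := fun h => (((hE2mem f).1 (hYE2 h)).2.2) rfl
      have heY : e ∉ insert f Y := by
        rw [Finset.mem_insert]
        rintro (h | h)
        · exact hef h
        · exact ((hE2mem e).1 (hYE2 h)).2.1 rfl
      dsimp only
      rw [Finset.mem_coe, Finset.mem_filter, hPS, Finset.mem_powersetCard]
      refine ⟨⟨?_, ?_⟩, by simp, by simp⟩
      · apply Finset.insert_subset he
        apply Finset.insert_subset hf
        exact fun x hx => ((hE2mem x).1 (hYE2 hx)).1
      · rw [Finset.card_insert_of_notMem heY, Finset.card_insert_of_notMem hfY, hYcard]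
    · intro X hX
      rw [Finset.mem_coe, Finset.mem_filter] at hX
      obtain ⟨-, heX, hfX⟩ := hX
      dsimp only
      rw [Finset.insert_erase (Finset.mem_erase.2 ⟨fun h => hef h.symm, hfX⟩),
        Finset.insert_erase heX]
    · intro Y hY
      rw [Finset.mem_coe, Finset.mem_powersetCard] at hY
      have hfY : f ∉ Y := fun h => (((hE2mem f).1 (hY.1 h)).2.2) rfl
      have heY : e ∉ insert f Y := by
        rw [Finset.mem_insert]
        rintro (h | h)
        · exact hef h
        · exact ((hE2mem e).1 (hY.1 h)).2.1 rfl
      dsimp only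
      rw [Finset.erase_insert heY, Finset.erase_insert hfY]
  have hS10 : (PS.filter (fun X => e ∈ X ∧ f ∉ X)).card = (E2.powersetCard (v+1)).card := by
    apply Finset.card_nbij' (fun X => X.erase e) (fun Y => insert e Y)
    · intro X hX
      rw [Finset.mem_coe, Finset.mem_filter, hPS, Finset.mem_powersetCard] at hX
      obtain ⟨⟨hXE, hXcard⟩, heX, hfX⟩ := hX
      dsimp only
      rw [Finset.mem_coe, Finset.mem_powersetCard]
      constructor
      · intro x hx
        rw [Finset.mem_erase] at hx
        exact (hE2mem x).2 ⟨hXE hx.2, hx.1, fun h => hfX (h ▸ hx.2)⟩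
      · rw [Finset.card_erase_of_mem heX, hXcard]
        omega
    · intro Y hY
      rw [Finset.mem_coe, Finset.mem_powersetCard] at hY
      obtain ⟨hYE2, hYcard⟩ := hY
      have heY : e ∉ Y := fun h => ((hE2mem e).1 (hYE2 h)).2.1 rfl
      dsimp only
      rw [Finset.mem_coe, Finset.mem_filter, hPS, Finset.mem_powersetCard]
      refine ⟨⟨?_, ?_⟩, by simp, ?_⟩
      · exact Finset.insert_subset he (fun x hx => ((hE2mem x).1 (hYE2 hx)).1)
      · rw [Finset.card_insert_of_notMem heY, hYcard]
      · rw [Finset.mem_insert]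
        rintro (h | h)
        · exact hef h.symm
        · exact ((hE2mem f).1 (hYE2 h)).2.2 rfl
    · intro X hX
      rw [Finset.mem_coe, Finset.mem_filter] at hX
      exact Finset.insert_erase hX.2.1
    · intro Y hY
      rw [Finset.mem_coe, Finset.mem_powersetCard] at hY
      exact Finset.erase_insert (fun h => ((hE2mem e).1 (hY.1 h)).2.1 rfl)
  have hS01 : (PS.filter (fun X => e ∉ X ∧ f ∈ X)).card = (E2.powersetCard (v+1)).card := by
    apply Finset.card_nbij' (fun X => X.erase f) (fun Y => insert f Y)
    · intro X hX
      rw [Finset.mem_coe, Finset.mem_filter, hPS, Finset.mem_powersetCard] at hX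
      obtain ⟨⟨hXE, hXcard⟩, heX, hfX⟩ := hX
      dsimp only
      rw [Finset.mem_coe, Finset.mem_powersetCard]
      constructor
      · intro x hx
        rw [Finset.mem_erase] at hx
        exact (hE2mem x).2 ⟨hXE hx.2, fun h => heX (h ▸ hx.2), hx.1⟩
      · rw [Finset.card_erase_of_mem hfX, hXcard]
        omega
    · intro Y hY
      rw [Finset.mem_coe, Finset.mem_powersetCard] at hY
      obtain ⟨hYE2, hYcard⟩ := hY
      have hfY : f ∉ Y := fun h => ((hE2mem f).1 (hYE2 h)).2.2 rfl
      dsimp only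
      rw [Finset.mem_coe, Finset.mem_filter, hPS, Finset.mem_powersetCard]
      refine ⟨⟨?_, ?_⟩, ?_, by simp⟩
      · exact Finset.insert_subset hf (fun x hx => ((hE2mem x).1 (hYE2 hx)).1)
      · rw [Finset.card_insert_of_notMem hfY, hYcard]
      · rw [Finset.mem_insert]
        rintro (h | h)
        · exact hef h
        · exact ((hE2mem e).1 (hYE2 h)).2.1 rfl
    · intro X hX
      rw [Finset.mem_coe, Finset.mem_filter] at hX
      exact Finset.insert_erase hX.2.2
    · intro Y hY
      rw [Finset.mem_coe, Finset.mem_powersetCard] at hY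
      exact Finset.erase_insert (fun h => ((hE2mem f).1 (hY.1 h)).2.2 rfl)
  have hS00 : (PS.filter (fun X => e ∉ X ∧ f ∉ X)).card = (E2.powersetCard (v+2)).card := by
    congr 1
    ext X
    rw [Finset.mem_filter, hPS, Finset.mem_powersetCard, Finset.mem_powersetCard]
    constructor
    · rintro ⟨⟨hXE, hXcard⟩, heX, hfX⟩
      exact ⟨fun x hx => (hE2mem x).2 ⟨hXE hx, fun h => heX (h ▸ hx), fun h => hfX (h ▸ hx)⟩, hXcard⟩
    · rintro ⟨hXE2, hXcard⟩
      exact ⟨⟨fun x hx => ((hE2mem x).1 (hXE2 hx)).1, hXcard⟩,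
        fun h => ((hE2mem e).1 (hXE2 h)).2.1 rfl, fun h => ((hE2mem f).1 (hXE2 h)).2.2 rfl⟩
  -- injection 1 : (v+1) copies of each nonbase with e, without f, inject into bases with e,f
  have hy : (N.filter (fun X => e ∈ X ∧ f ∉ X)).card * (v+1) ≤
      (B.filter (fun X => e ∈ X ∧ f ∈ X)).card := by
    have hD : ((N.filter (fun X => e ∈ X ∧ f ∉ X)).sigma (fun C => C.erase e)).card
        = (N.filter (fun X => e ∈ X ∧ f ∉ X)).card * (v+1) := by
      rw [Finset.card_sigma]
      calc ∑ C ∈ N.filter (fun X => e ∈ X ∧ f ∉ X), (C.erase e).card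
          = ∑ _C ∈ N.filter (fun X => e ∈ X ∧ f ∉ X), (v+1) := by
            refine Finset.sum_congr rfl (fun C hC => ?_)
            rw [Finset.mem_filter] at hC
            rw [Finset.card_erase_of_mem hC.2.1, (hNmem C hC.1).2.1]
            omega
        _ = _ := by rw [Finset.sum_const, smul_eq_mul]
    rw [← hD]
    apply Finset.card_le_card_of_injOn (fun q => insert f (q.1.erase q.2))
    · rintro ⟨C, g⟩ hq
      rw [Finset.mem_coe, Finset.mem_sigma, Finset.mem_filter] at hq
      obtain ⟨⟨hCN, heC, hfC⟩, hg⟩ := hq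
      obtain ⟨hCE, hCcard, hCB⟩ := hNmem C hCN
      rw [Finset.mem_erase] at hg
      obtain ⟨hge, hgC⟩ := hg
      have hfCg : f ∉ C.erase g := fun h => hfC (Finset.erase_subset _ _ h)
      have hYE : insert f (C.erase g) ⊆ E :=
        Finset.insert_subset hf ((Finset.erase_subset _ _).trans hCE)
      have hYcard : (insert f (C.erase g)).card = v + 2 := by
        rw [Finset.card_insert_of_notMem hfCg, Finset.card_erase_of_mem hgC, hCcard]
        omega
      have hYB : insert f (C.erase g) ∈ B := by
        by_contra hYB
        have hsub : C ∆ (insert f (C.erase g)) ⊆ {g, f} := by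
          intro x hx
          rw [Finset.mem_symmDiff] at hx
          rcases hx with ⟨hx1, hx2⟩ | ⟨hx1, hx2⟩
          · have hxg : x = g := by
              by_contra hxg
              exact hx2 (Finset.mem_insert_of_mem (Finset.mem_erase.2 ⟨hxg, hx1⟩))
            simp [hxg]
          · rcases Finset.mem_insert.1 hx1 with rfl | h
            · simp
            · exact absurd (Finset.erase_subset _ _ h) hx2
        have hle : (C ∆ insert f (C.erase g)).card ≤ 2 := by
          refine le_trans (Finset.card_le_card hsub) (le_trans (Finset.card_insert_le _ _) ?_)
          simp
        have hCeq := nonbase_eq hM hCE hCcard hCB hYE hYcard hYB hle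
        exact hfC (hCeq ▸ Finset.mem_insert_self f _)
      rw [Finset.mem_coe, Finset.mem_filter]
      exact ⟨hYB, Finset.mem_insert_of_mem (Finset.mem_erase.2 ⟨Ne.symm hge, heC⟩),
        Finset.mem_insert_self _ _⟩
    · rintro ⟨C, g⟩ hq1 ⟨C', g'⟩ hq2 heq
      rw [Finset.mem_coe, Finset.mem_sigma, Finset.mem_filter] at hq1 hq2
      obtain ⟨⟨hCN, heC, hfC⟩, hg⟩ := hq1
      obtain ⟨⟨hC'N, heC', hfC'⟩, hg'⟩ := hq2
      obtain ⟨hCE, hCcard, hCB⟩ := hNmem C hCN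
      obtain ⟨hC'E, hC'card, hC'B⟩ := hNmem C' hC'N
      rw [Finset.mem_erase] at hg hg'
      have hfCg : f ∉ C.erase g := fun h => hfC (Finset.erase_subset _ _ h)
      have hfC'g' : f ∉ C'.erase g' := fun h => hfC' (Finset.erase_subset _ _ h)
      dsimp only at heq
      have h1 : C.erase g = C'.erase g' := by
        have h2 := congrArg (fun s => Finset.erase s f) heq
        simpa [Finset.erase_insert hfCg, Finset.erase_insert hfC'g'] using h2
      have hsub : C ∆ C' ⊆ {g, g'} := by
        intro x hx
        rw [Finset.mem_symmDiff] at hx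
        rcases hx with ⟨hx1, hx2⟩ | ⟨hx1, hx2⟩
        · have hxg : x = g := by
            by_contra hxg
            exact hx2 (Finset.erase_subset _ _ (h1 ▸ Finset.mem_erase.2 ⟨hxg, hx1⟩))
          simp [hxg]
        · have hxg : x = g' := by
            by_contra hxg
            exact hx2 (Finset.erase_subset _ _ (h1.symm ▸ Finset.mem_erase.2 ⟨hxg, hx1⟩))
          simp [hxg]
      have hle : (C ∆ C').card ≤ 2 := by
        refine le_trans (Finset.card_le_card hsub) (le_trans (Finset.card_insert_le _ _) ?_)
        simp
      have hCC' : C = C' := nonbase_eq hM hCE hCcard hCB hC'E hC'card hC'B hle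
      have hgg : g = g' := by
        have hne : g ∉ C'.erase g' := by rw [← h1]; exact Finset.notMem_erase g C
        rw [Finset.mem_erase] at hne
        push_neg at hne
        have hgC2 : g ∈ C' := by rw [← hCC']; exact hg.2
        by_contra hne2
        exact (hne hne2) hgC2
      rw [hCC', hgg]
  -- injection 2 : (u+1) copies of each nonbase with f, without e, inject into bases avoiding e,f
  have hz : (N.filter (fun X => e ∉ X ∧ f ∈ X)).card * (u+1) ≤
      (B.filter (fun X => e ∉ X ∧ f ∉ X)).card := by
    have hD : ((N.filter (fun X => e ∉ X ∧ f ∈ X)).sigma (fun C => E \ insert e C)).card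
        = (N.filter (fun X => e ∉ X ∧ f ∈ X)).card * (u+1) := by
      rw [Finset.card_sigma]
      calc ∑ C ∈ N.filter (fun X => e ∉ X ∧ f ∈ X), (E \ insert e C).card
          = ∑ _C ∈ N.filter (fun X => e ∉ X ∧ f ∈ X), (u+1) := by
            refine Finset.sum_congr rfl (fun C hC => ?_)
            rw [Finset.mem_filter] at hC
            obtain ⟨hCE, hCcard, hCB⟩ := hNmem C hC.1
            rw [Finset.card_sdiff_of_subset (Finset.insert_subset he hCE),
              Finset.card_insert_of_notMem hC.2.1, hCcard, hu]
            omega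
        _ = _ := by rw [Finset.sum_const, smul_eq_mul]
    rw [← hD]
    apply Finset.card_le_card_of_injOn (fun q => insert q.2 (q.1.erase f))
    · rintro ⟨C, g⟩ hq
      rw [Finset.mem_coe, Finset.mem_sigma, Finset.mem_filter] at hq
      obtain ⟨⟨hCN, heC, hfC⟩, hg⟩ := hq
      obtain ⟨hCE, hCcard, hCB⟩ := hNmem C hCN
      rw [Finset.mem_sdiff, Finset.mem_insert] at hg
      push_neg at hg
      obtain ⟨hgE, hge, hgC⟩ := hg
      have hgCf : g ∉ C.erase f := fun h => hgC (Finset.erase_subset _ _ h)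
      have hYE : insert g (C.erase f) ⊆ E :=
        Finset.insert_subset hgE ((Finset.erase_subset _ _).trans hCE)
      have hYcard : (insert g (C.erase f)).card = v + 2 := by
        rw [Finset.card_insert_of_notMem hgCf, Finset.card_erase_of_mem hfC, hCcard]
        omega
      have hYB : insert g (C.erase f) ∈ B := by
        by_contra hYB
        have hsub : C ∆ (insert g (C.erase f)) ⊆ {f, g} := by
          intro x hx
          rw [Finset.mem_symmDiff] at hx
          rcases hx with ⟨hx1, hx2⟩ | ⟨hx1, hx2⟩
          · have hxf : x = f := by
              by_contra hxf
              exact hx2 (Finset.mem_insert_of_mem (Finset.mem_erase.2 ⟨hxf, hx1⟩))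
            simp [hxf]
          · rcases Finset.mem_insert.1 hx1 with rfl | h
            · simp
            · exact absurd (Finset.erase_subset _ _ h) hx2
        have hle : (C ∆ insert g (C.erase f)).card ≤ 2 := by
          refine le_trans (Finset.card_le_card hsub) (le_trans (Finset.card_insert_le _ _) ?_)
          simp
        have hCeq := nonbase_eq hM hCE hCcard hCB hYE hYcard hYB hle
        exact hgC (hCeq ▸ Finset.mem_insert_self g _)
      rw [Finset.mem_coe, Finset.mem_filter]
      refine ⟨hYB, ?_, ?_⟩
      · rw [Finset.mem_insert]
        rintro (h | h)
        · exact hge h.symm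
        · exact heC (Finset.erase_subset _ _ h)
      · rw [Finset.mem_insert]
        rintro (h | h)
        · exact hgC (h ▸ hfC)
        · exact (Finset.notMem_erase f C) h
    · rintro ⟨C, g⟩ hq1 ⟨C', g'⟩ hq2 heq
      rw [Finset.mem_coe, Finset.mem_sigma, Finset.mem_filter] at hq1 hq2
      obtain ⟨⟨hCN, heC, hfC⟩, hg⟩ := hq1
      obtain ⟨⟨hC'N, heC', hfC'⟩, hg'⟩ := hq2
      obtain ⟨hCE, hCcard, hCB⟩ := hNmem C hCN
      obtain ⟨hC'E, hC'card, hC'B⟩ := hNmem C' hC'N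
      rw [Finset.mem_sdiff, Finset.mem_insert] at hg hg'
      push_neg at hg hg'
      obtain ⟨hgE, hge, hgC⟩ := hg
      obtain ⟨hg'E, hg'e, hg'C'⟩ := hg'
      have hgCf : g ∉ C.erase f := fun h => hgC (Finset.erase_subset _ _ h)
      have hg'C'f : g' ∉ C'.erase f := fun h => hg'C' (Finset.erase_subset _ _ h)
      dsimp only at heq
      have h1 : C.erase f = (insert g (C.erase f)).erase g := (Finset.erase_insert hgCf).symm
      have h1' : C'.erase f = (insert g' (C'.erase f)).erase g' := (Finset.erase_insert hg'C'f).symm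
      have hsub : C ∆ C' ⊆ {g, g'} := by
        intro x hx
        rw [Finset.mem_symmDiff] at hx
        rcases hx with ⟨hx1, hx2⟩ | ⟨hx1, hx2⟩
        · -- x ∈ C, x ∉ C' : x ≠ f (since f ∈ C'), so x ∈ C.erase f ⊆ insert g' (C'.erase f)
          have hxf : x ≠ f := fun h => hx2 (h ▸ hfC')
          have hx3 : x ∈ insert g' (C'.erase f) := by
            rw [← heq]
            exact Finset.mem_insert_of_mem (Finset.mem_erase.2 ⟨hxf, hx1⟩)
          rcases Finset.mem_insert.1 hx3 with rfl | h
          · simp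
          · exact absurd (Finset.erase_subset _ _ h) hx2
        · have hxf : x ≠ f := fun h => hx2 (h ▸ hfC)
          have hx3 : x ∈ insert g (C.erase f) := by
            rw [heq]
            exact Finset.mem_insert_of_mem (Finset.mem_erase.2 ⟨hxf, hx1⟩)
          rcases Finset.mem_insert.1 hx3 with rfl | h
          · simp
          · exact absurd (Finset.erase_subset _ _ h) hx2
      have hle : (C ∆ C').card ≤ 2 := by
        refine le_trans (Finset.card_le_card hsub) (le_trans (Finset.card_insert_le _ _) ?_)
        simp
      have hCC' : C = C' := nonbase_eq hM hCE hCcard hCB hC'E hC'card hC'B hle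
      have hgg : g = g' := by
        have hgmem : g ∈ insert g' (C'.erase f) := by
          rw [← heq]; exact Finset.mem_insert_self g _
        rcases Finset.mem_insert.1 hgmem with h | h
        · exact h
        · exact absurd (Finset.erase_subset _ _ h) (hCC' ▸ hgC)
      rw [hCC', hgg]
  -- assemble counts
  have hval : ∀ k, (E2.powersetCard k).card = (v+u+2).choose k := by
    intro k; rw [Finset.card_powersetCard, hE2card]
  set a := (v+u+2).choose v with ha
  set b := (v+u+2).choose (v+1) with hb
  set c := (v+u+2).choose (v+2) with hc
  set P := (B.filter (fun X => e ∈ X ∧ f ∈ X)).card with hPdef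
  set R := (B.filter (fun X => e ∈ X ∧ f ∉ X)).card with hRdef
  set S := (B.filter (fun X => e ∉ X ∧ f ∈ X)).card with hSdef
  set Q := (B.filter (fun X => e ∉ X ∧ f ∉ X)).card with hQdef
  set nx := (N.filter (fun X => e ∈ X ∧ f ∈ X)).card with hnx
  set ny := (N.filter (fun X => e ∈ X ∧ f ∉ X)).card with hny
  set nz := (N.filter (fun X => e ∉ X ∧ f ∈ X)).card with hnz
  set nw := (N.filter (fun X => e ∉ X ∧ f ∉ X)).card with hnw
  have ea : P + nx = a := by
    rw [ha, ← hval v, ← hS11]; exact (hsp _ inferInstance).symm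
  have eb : R + ny = b := by
    rw [hb, ← hval (v+1), ← hS10]; exact (hsp _ inferInstance).symm
  have eb' : S + nz = b := by
    rw [hb, ← hval (v+1), ← hS01]; exact (hsp _ inferInstance).symm
  have ec : Q + nw = c := by
    rw [hc, ← hval (v+2), ← hS00]; exact (hsp _ inferInstance).symm
  have i1 : b * (v+1) = a * (u+2) := by
    have h := Nat.choose_succ_right_eq (v+u+2) v
    rw [show v+u+2-v = u+2 by omega] at h
    exact h
  have i2 : c * (v+2) = b * (u+1) := by
    have h := Nat.choose_succ_right_eq (v+u+2) (v+1)
    rw [show v+u+2-(v+1) = u+1 by omega] at h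
    exact h
  have hR : a * (u+2) ≤ R*(v+1) + P := by
    calc a * (u+2) = b * (v+1) := i1.symm
      _ = (R + ny) * (v+1) := by rw [eb]
      _ = R*(v+1) + ny*(v+1) := by ring
      _ ≤ R*(v+1) + P := Nat.add_le_add_left hy _
  have hS' : c * (v+2) ≤ S*(u+1) + Q := by
    calc c * (v+2) = b * (u+1) := i2
      _ = (S + nz) * (u+1) := by rw [eb']
      _ = S*(u+1) + nz*(u+1) := by ring
      _ ≤ S*(u+1) + Q := Nat.add_le_add_left hz _
  have hPa : P ≤ a := by omega
  have hQc : Q ≤ c := by omega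
  exact arith_key a c P R S Q u v hR hS' hPa hQc

/-- Sparse paving matroids satisfy the negative correlation property: for a uniformly
random basis `X` and distinct `e, f ∈ E`, `Pr(e ∈ X ∧ f ∈ X) ≤ Pr(e ∈ X)·Pr(f ∈ X)`. -/
theorem stmt6 (E : Finset α) (r m : ℕ) (B : Finset (Finset α))
    (hM : IsSparsePaving E r B) (hm : E.card = m)
    (e f : α) (he : e ∈ E) (hf : f ∈ E) (hef : e ≠ f) :
    ((B.filter (fun X => e ∈ X ∧ f ∈ X)).card : ℚ) / B.card ≤
      ((B.filter (fun X => e ∈ X)).card / B.card) *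
        ((B.filter (fun X => f ∈ X)).card / B.card) := by
  have hkey := key_ineq E r B hM e f he hf hef
  have hn : 0 < B.card := Finset.card_pos.2 hM.1.1.1
  set P := (B.filter (fun X => e ∈ X ∧ f ∈ X)).card with hP
  set R := (B.filter (fun X => e ∈ X ∧ f ∉ X)).card with hR
  set S := (B.filter (fun X => e ∉ X ∧ f ∈ X)).card with hS
  set Q := (B.filter (fun X => e ∉ X ∧ f ∉ X)).card with hQ
  have hsplite : (B.filter (fun X => e ∈ X)).card = P + R :=
    filter_split B (fun X => e ∈ X) (fun X => f ∈ X)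
  have hsplitf : (B.filter (fun X => f ∈ X)).card = P + S := by
    have h0 := filter_split B (fun X => f ∈ X) (fun X => e ∈ X)
    have h1 : B.filter (fun X => f ∈ X ∧ e ∈ X) = B.filter (fun X => e ∈ X ∧ f ∈ X) := by
      ext X; simp only [Finset.mem_filter]; tauto
    have h2 : B.filter (fun X => f ∈ X ∧ ¬ e ∈ X) = B.filter (fun X => e ∉ X ∧ f ∈ X) := by
      ext X; simp only [Finset.mem_filter]; tauto
    rw [h1, h2] at h0
    exact h0
  have h1 : (B.filter (fun X => e ∈ X)).card + (B.filter (fun X => ¬ e ∈ X)).card = B.card :=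
    Finset.card_filter_add_card_filter_not _
  have h2 := filter_split B (fun X => e ∉ X) (fun X => f ∈ X)
  have h3 : B.filter (fun X => e ∉ X ∧ ¬ f ∈ X) = B.filter (fun X => e ∉ X ∧ f ∉ X) := rfl
  rw [h3] at h2
  have htot : B.card = P + R + S + Q := by omega
  have hN : P * B.card ≤ (P + R) * (P + S) := mul_key P R S Q B.card hkey htot
  have hnQ : (0:ℚ) < (B.card : ℚ) := by exact_mod_cast hn
  rw [hsplite, hsplitf, div_mul_div_comm, div_le_div_iff₀ hnQ (mul_pos hnQ hnQ)]
  calc (P:ℚ) * (↑B.card * ↑B.card) = (↑(P * B.card)) * ↑B.card := by push_cast; ring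
    _ ≤ (↑((P+R)*(P+S))) * ↑B.card := by
        apply mul_le_mul_of_nonneg_right _ (by positivity)
        exact_mod_cast hN
    _ = ↑(P+R) * ↑(P+S) * ↑B.card := by push_cast; ring
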